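/- arXiv:2404.15550 — 3 statements merged into one kernel-verified Lean document; each statement's English description precedes it below -/
import Mathlib

section
/- Let (X,d,μ) be a space of homogeneous type, let p(·), q(·) ∈ 𝒫₁(X) satisfy 1/p(x) − 1/q(x) ≡ η for a constant η ∈ [0,1), and let ω be a weight on X. If there is a constant C such that sup_{t>0} t ‖ω χ_{{x∈X : M_η f(x) > t}}‖_{q(·)} ≤ C‖ω f‖_{p(·)} for every measurable function f, then ‖ω χ_B‖_{q(·)} < ∞ for every ball B ⊆ X. -/
open MeasureTheory ENNReal Set Filter Topology

noncomputable section

variable {X : Type*}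

/-- `d` is a quasi-metric on `X` with quasi-triangle constant `A0`. -/
def IsQuasiMetric (d : X → X → ℝ) (A0 : ℝ) : Prop :=
  1 ≤ A0 ∧ (∀ x y, 0 ≤ d x y) ∧ (∀ x y, d x y = 0 ↔ x = y) ∧
    (∀ x y, d x y = d y x) ∧ ∀ x y z, d x y ≤ A0 * (d x z + d z y)

/-- The quasi-metric ball `B(c,r)`. -/
def qball (d : X → X → ℝ) (c : X) (r : ℝ) : Set X := {y | d c y < r}

/-- The measure `μ` is doubling (with constant `Cμ`) on quasi-metric balls:
`0 < μ(B(x,2r)) ≤ Cμ·μ(B(x,r)) < ∞`. -/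
def IsDoubling [MeasurableSpace X] (d : X → X → ℝ) (μ : Measure X) (Cμ : ℝ≥0∞) : Prop :=
  1 ≤ Cμ ∧ ∀ (x : X) (r : ℝ), 0 < r →
    0 < μ (qball d x (2 * r)) ∧ μ (qball d x (2 * r)) ≤ Cμ * μ (qball d x r) ∧
      Cμ * μ (qball d x r) < ∞

/-- The Luxemburg norm `‖f‖_{p(·)}` for a variable (possibly infinite) exponent `p`. -/
def luxNorm [MeasurableSpace X] (μ : Measure X) (p : X → ℝ≥0∞) (f : X → ℝ≥0∞) : ℝ≥0∞ :=
  sInf {lam : ℝ≥0∞ | 0 < lam ∧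
    (∫⁻ x in {x | p x ≠ ∞}, (f x / lam) ^ (p x).toReal ∂μ) +
      essSup (fun x => f x / lam) (μ.restrict {x | p x = ∞}) ≤ 1}

/-- The class `𝒫₁(X)`: exponents with values in `[1,∞)` and `p₊ < ∞`. -/
def MemP1 [MeasurableSpace X] (μ : Measure X) (p : X → ℝ≥0∞) : Prop :=
  Measurable p ∧ (∀ x, 1 ≤ p x) ∧ (∀ x, p x ≠ ∞) ∧ essSup p μ < ∞

/-- The class `𝒫(X)`: additionally `1 < p₋`. -/
def MemP [MeasurableSpace X] (μ : Measure X) (p : X → ℝ≥0∞) : Prop :=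
  MemP1 μ p ∧ 1 < essInf p μ

/-- Local log-Hölder continuity `LH₀`. -/
def MemLH0 (d : X → X → ℝ) (p : X → ℝ≥0∞) : Prop :=
  ∃ C0 : ℝ, 0 ≤ C0 ∧ ∀ x y, d x y < 1 / 2 →
    |(p x).toReal - (p y).toReal| ≤ C0 / Real.log (Real.exp 1 + 1 / d x y)

/-- Log-Hölder decay at infinity `LH_∞` with base point `x0` and limit value `pinf`. -/
def MemLHinf (d : X → X → ℝ) (x0 : X) (pinf : ℝ) (p : X → ℝ≥0∞) : Prop :=
  ∃ Cinf : ℝ, 0 ≤ Cinf ∧ ∀ x, |(p x).toReal - pinf| ≤ Cinf / Real.log (Real.exp 1 + d x x0)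

/-- Global log-Hölder continuity `LH = LH₀ ∩ LH_∞`. -/
def MemLH (d : X → X → ℝ) (p : X → ℝ≥0∞) : Prop :=
  MemLH0 d p ∧ ∃ x0 pinf, MemLHinf d x0 pinf p

/-- `w` is a weight: measurable, positive and finite a.e., and locally integrable. -/
def IsWeight [MeasurableSpace X] (d : X → X → ℝ) (μ : Measure X) (w : X → ℝ≥0∞) : Prop :=
  Measurable w ∧ (∀ᵐ x ∂μ, 0 < w x ∧ w x < ∞) ∧
    ∀ (c : X) (r : ℝ), 0 < r → ∫⁻ x in qball d c r, w x ∂μ < ∞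

/-- The pointwise conjugate exponent `p′(·)`, `1/p(x) + 1/p′(x) = 1`. -/
def conjExp (p : X → ℝ≥0∞) : X → ℝ≥0∞ := fun x => if p x = ∞ then 1 else p x / (p x - 1)

/-- The `A_{p(·),q(·)}` characteristic constant
`sup_B μ(B)^{η−1} ‖w χ_B‖_{q(·)} ‖w⁻¹ χ_B‖_{p′(·)}`. -/
def ApqConst [MeasurableSpace X] (d : X → X → ℝ) (μ : Measure X) (η : ℝ)
    (p q : X → ℝ≥0∞) (w : X → ℝ≥0∞) : ℝ≥0∞ :=
  ⨆ (c : X) (r : ℝ) (_ : 0 < r),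
    μ (qball d c r) ^ (η - 1) * luxNorm μ q ((qball d c r).indicator w) *
      luxNorm μ (conjExp p) ((qball d c r).indicator fun x => (w x)⁻¹)

/-- The fractional maximal operator `M_η`. -/
def fracMax [MeasurableSpace X] (d : X → X → ℝ) (μ : Measure X) (η : ℝ)
    (f : X → ℝ≥0∞) (x : X) : ℝ≥0∞ :=
  ⨆ (c : X) (r : ℝ) (_ : 0 < r) (_ : x ∈ qball d c r),
    μ (qball d c r) ^ (η - 1) * ∫⁻ y in qball d c r, f y ∂μ

/-- The Muckenhoupt `A₁` condition: `Mw ≤ C w` a.e. -/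
def MemA1 [MeasurableSpace X] (d : X → X → ℝ) (μ : Measure X) (w : X → ℝ≥0∞) : Prop :=
  ∃ C : ℝ≥0∞, C ≠ ∞ ∧ ∀ᵐ x ∂μ, fracMax d μ 0 w x ≤ C * w x

/-- The Muckenhoupt `A_p` condition for `1 < p < ∞`. -/
def MemAp [MeasurableSpace X] (d : X → X → ℝ) (μ : Measure X) (p : ℝ)
    (w : X → ℝ≥0∞) : Prop :=
  (⨆ (c : X) (r : ℝ) (_ : 0 < r),
    ((μ (qball d c r))⁻¹ * ∫⁻ x in qball d c r, w x ∂μ) *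
      ((μ (qball d c r))⁻¹ * ∫⁻ x in qball d c r, w x ^ (-(1 / (p - 1))) ∂μ) ^ (p - 1)) ≠ ∞

/-- The class `A_∞ = ⋃_{p ≥ 1} A_p`. -/
def MemAinfty [MeasurableSpace X] (d : X → X → ℝ) (μ : Measure X) (w : X → ℝ≥0∞) : Prop :=
  MemA1 d μ w ∨ ∃ p : ℝ, 1 < p ∧ MemAp d μ p w



lemma luxNorm_mono {X : Type*} [MeasurableSpace X] (μ : Measure X) (p : X → ℝ≥0∞)
    {f g : X → ℝ≥0∞} (h : ∀ x, f x ≤ g x) : luxNorm μ p f ≤ luxNorm μ p g := by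
  apply sInf_le_sInf
  rintro lam ⟨hl, hle⟩
  refine ⟨hl, le_trans (add_le_add ?_ ?_) hle⟩
  · exact lintegral_mono fun x =>
      ENNReal.rpow_le_rpow (ENNReal.div_le_div_right (h x) _) ENNReal.toReal_nonneg
  · exact essSup_mono_ae (Filter.Eventually.of_forall fun x => ENNReal.div_le_div_right (h x) _)

/-- A weak-type bound for `M_η` forces `‖ωχ_B‖_{q(·)} < ∞` for
every ball `B`. -/
theorem statement14 {X : Type*} [MeasurableSpace X]
    (d : X → X → ℝ) (A0 : ℝ) (μ : Measure X) (Cμ : ℝ≥0∞)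
    (hd : IsQuasiMetric d A0)
    (hball : ∀ (c : X) (r : ℝ), MeasurableSet (qball d c r))
    (hdbl : IsDoubling d μ Cμ)
    (η : ℝ) (hη0 : 0 ≤ η) (hη1 : η < 1)
    (p q : X → ℝ≥0∞) (hp : MemP1 μ p) (hq : MemP1 μ q)
    (hpq : ∀ x, (p x)⁻¹ = (q x)⁻¹ + ENNReal.ofReal η)
    (ω : X → ℝ≥0∞) (hω : IsWeight d μ ω)
    (C : ℝ≥0∞) (hC : C ≠ ∞)
    (hbound : ∀ f : X → ℝ≥0∞, Measurable f → ∀ t : ℝ≥0∞, 0 < t →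
      t * luxNorm μ q ({x | t < fracMax d μ η f x}.indicator ω) ≤
        C * luxNorm μ p (fun x => ω x * f x)) :
    ∀ (c : X) (r : ℝ), 0 < r → luxNorm μ q ((qball d c r).indicator ω) ≠ ∞ := by
  intro c r hr
  obtain ⟨hp_meas, hp_one, hp_ne, -⟩ := hp
  obtain ⟨hω_meas, hω_ae, -⟩ := hω
  set B := qball d c r with hBdef
  have hBmeas : MeasurableSet B := hball c r
  have hBpos : 0 < μ B := by
    have h := (hdbl.2 c (r / 2) (by linarith)).1
    have h2 : 2 * (r / 2) = r := by ring
    rwa [h2] at h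
  have hBfin : μ B < ∞ := by
    have h := hdbl.2 c r hr
    calc μ B ≤ Cμ * μ B := by
          nth_rewrite 1 [← one_mul (μ B)]
          exact mul_le_mul_left hdbl.1 _
      _ < ∞ := h.2.2
  -- null set where ω is infinite
  have hnull : μ {x | ω x = ∞} = 0 := by
    rw [ae_iff] at hω_ae
    refine measure_mono_null ?_ hω_ae
    intro x hx
    simp only [Set.mem_setOf_eq] at hx ⊢
    intro hcon
    exact absurd hcon.2 (by simp [hx])
  -- find n with positive measure truncation
  obtain ⟨n, hn⟩ : ∃ n : ℕ, 0 < μ (B ∩ {x | ω x ≤ (n : ℝ≥0∞)}) := by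
    by_contra hcon
    push_neg at hcon
    have hU : μ (⋃ n : ℕ, B ∩ {x | ω x ≤ (n : ℝ≥0∞)}) = 0 :=
      measure_iUnion_null fun n => le_antisymm (hcon n) zero_le
    have hsub : B \ {x | ω x = ∞} ⊆ ⋃ n : ℕ, B ∩ {x | ω x ≤ (n : ℝ≥0∞)} := by
      rintro x ⟨hxB, hx⟩
      obtain ⟨m, hm⟩ := ENNReal.exists_nat_gt (by simpa using hx : ω x ≠ ∞)
      exact Set.mem_iUnion.2 ⟨m, hxB, hm.le⟩
    have hBd : μ (B \ {x | ω x = ∞}) = μ B := measure_diff_null hnull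
    have : μ B = 0 := by
      rw [← hBd]
      exact measure_mono_null hsub hU
    exact hBpos.ne' this
  set E := B ∩ {x | ω x ≤ (n : ℝ≥0∞)} with hEdef
  have hEmeas : MeasurableSet E := hBmeas.inter (measurableSet_le hω_meas measurable_const)
  set f : X → ℝ≥0∞ := E.indicator 1 with hfdef
  have hf : Measurable f := measurable_one.indicator hEmeas
  have hEfin : μ E < ∞ := lt_of_le_of_lt (measure_mono Set.inter_subset_left) hBfin
  set v : ℝ≥0∞ := μ B ^ (η - 1) * μ E with hvdef
  have hrpow_pos : 0 < μ B ^ (η - 1) := ENNReal.rpow_pos hBpos hBfin.ne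
  have hrpow_fin : μ B ^ (η - 1) ≠ ∞ := by
    rw [Ne, ENNReal.rpow_eq_top_iff]
    push_neg
    exact ⟨fun h => absurd h hBpos.ne', fun h => absurd h hBfin.ne⟩
  have hv0 : 0 < v := ENNReal.mul_pos hrpow_pos.ne' hn.ne'
  have hvfin : v ≠ ∞ := ENNReal.mul_ne_top hrpow_fin hEfin.ne
  set t : ℝ≥0∞ := v / 2 with htdef
  have ht0 : 0 < t := ENNReal.div_pos hv0.ne' (by norm_num)
  have htv : t < v := ENNReal.half_lt_self hv0.ne' hvfin
  -- lower bound for the fractional maximal function on B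
  have hMB : ∀ x ∈ B, v ≤ fracMax d μ η f x := by
    intro x hx
    have key : (∫⁻ y in B, f y ∂μ) = μ E := by
      rw [hfdef, lintegral_indicator hEmeas, Measure.restrict_restrict hEmeas]
      simp [Set.inter_eq_self_of_subset_left (Set.inter_subset_left : E ⊆ B)]
      exact congrArg μ (Set.inter_eq_self_of_subset_left Set.inter_subset_left)
    calc v = μ B ^ (η - 1) * ∫⁻ y in B, f y ∂μ := by rw [key]
      _ ≤ fracMax d μ η f x :=
        le_iSup_of_le c <| le_iSup_of_le r <| le_iSup_of_le hr <| le_iSup_of_le hx le_rfl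
  -- B ⊆ superlevel set
  have hBS : ∀ x, B.indicator ω x ≤ ({x | t < fracMax d μ η f x}.indicator ω) x := by
    intro x
    by_cases hx : x ∈ B
    · have hxS : x ∈ {x | t < fracMax d μ η f x} := lt_of_lt_of_le htv (hMB x hx)
      rw [Set.indicator_of_mem hx, Set.indicator_of_mem hxS]
    · rw [Set.indicator_of_notMem hx]
      exact zero_le
  -- ω f ≤ n on B
  have hωf_le : ∀ x, ω x * f x ≤ B.indicator (fun _ => (n : ℝ≥0∞)) x := by
    intro x
    by_cases hx : x ∈ E
    · rw [hfdef, Set.indicator_of_mem hx, Set.indicator_of_mem hx.1]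
      simpa using hx.2
    · rw [hfdef, Set.indicator_of_notMem hx]
      simp
  -- finiteness of the RHS Luxemburg norm
  have hLfin : luxNorm μ p (B.indicator fun _ => (n : ℝ≥0∞)) ≠ ∞ := by
    set lam : ℝ≥0∞ := ((n : ℝ≥0∞) + 1) * (μ B + 1) with hlamdef
    have hlam_fin : lam ≠ ∞ := ENNReal.mul_ne_top (by simp) (by simp [hBfin.ne])
    have hlam_pos : 0 < lam := ENNReal.mul_pos (by simp) (by simp)
    have hdivle : (n : ℝ≥0∞) / lam ≤ 1 := by
      refine ENNReal.div_le_of_le_mul ?_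
      rw [one_mul, hlamdef]
      calc (n : ℝ≥0∞) ≤ (n : ℝ≥0∞) + 1 := le_self_add
        _ = ((n : ℝ≥0∞) + 1) * 1 := (mul_one _).symm
        _ ≤ ((n : ℝ≥0∞) + 1) * (μ B + 1) := mul_le_mul_right (le_add_self) _
    have hmem : lam ∈ {lam : ℝ≥0∞ | 0 < lam ∧
        (∫⁻ x in {x | p x ≠ ∞}, ((B.indicator fun _ => (n : ℝ≥0∞)) x / lam) ^ (p x).toReal ∂μ) +
          essSup (fun x => (B.indicator fun _ => (n : ℝ≥0∞)) x / lam)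
            (μ.restrict {x | p x = ∞}) ≤ 1} := by
      refine ⟨hlam_pos, ?_⟩
      have hset : {x | p x = ∞} = (∅ : Set X) := by
        ext x; simp [hp_ne x]
      have hset' : {x | p x ≠ ∞} = (Set.univ : Set X) := by
        ext x; simp [hp_ne x]
      rw [hset, hset', Measure.restrict_empty, Measure.restrict_univ, essSup_measure_zero, ENNReal.bot_eq_zero,
        add_zero]
      have hpt : ∀ x, ((B.indicator fun _ => (n : ℝ≥0∞)) x / lam) ^ (p x).toReal ≤
          B.indicator (fun _ => (n : ℝ≥0∞) / lam) x := by
        intro x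
        have h1x : (1 : ℝ) ≤ (p x).toReal := by
          have := ENNReal.toReal_mono (hp_ne x) (hp_one x)
          simpa using this
        by_cases hx : x ∈ B
        · rw [Set.indicator_of_mem hx, Set.indicator_of_mem hx]
          calc ((n : ℝ≥0∞) / lam) ^ (p x).toReal ≤ ((n : ℝ≥0∞) / lam) ^ (1 : ℝ) :=
              ENNReal.rpow_le_rpow_of_exponent_ge hdivle h1x
            _ = (n : ℝ≥0∞) / lam := ENNReal.rpow_one _
        · rw [Set.indicator_of_notMem hx, Set.indicator_of_notMem hx, ENNReal.zero_div,
            ENNReal.zero_rpow_of_pos (by linarith)]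
      calc (∫⁻ x, ((B.indicator fun _ => (n : ℝ≥0∞)) x / lam) ^ (p x).toReal ∂μ)
          ≤ ∫⁻ x, B.indicator (fun _ => (n : ℝ≥0∞) / lam) x ∂μ := lintegral_mono hpt
        _ = (n : ℝ≥0∞) / lam * μ B := lintegral_indicator_const hBmeas _
        _ ≤ 1 := by
            rw [div_eq_mul_inv, mul_right_comm, ← div_eq_mul_inv]
            refine ENNReal.div_le_of_le_mul ?_
            rw [one_mul, hlamdef]
            exact mul_le_mul' le_self_add le_self_add
    exact ne_top_of_le_ne_top hlam_fin (sInf_le hmem)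
  -- conclude
  have hb := hbound f hf t ht0
  have hmono1 : luxNorm μ q (B.indicator ω) ≤
      luxNorm μ q ({x | t < fracMax d μ η f x}.indicator ω) := luxNorm_mono _ _ hBS
  have hL : luxNorm μ p (fun x => ω x * f x) ≤
      luxNorm μ p (B.indicator fun _ => (n : ℝ≥0∞)) := luxNorm_mono _ _ hωf_le
  intro hcon
  have hSinf : luxNorm μ q ({x | t < fracMax d μ η f x}.indicator ω) = ∞ :=
    top_le_iff.1 (hcon ▸ hmono1)
  rw [hSinf, ENNReal.mul_top ht0.ne'] at hb
  exact ENNReal.mul_ne_top hC (ne_top_of_le_ne_top hLfin hL) (top_le_iff.1 hb)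


end
end

section
/- Let (X,d,μ) be a space of homogeneous type, let p(·), q(·) ∈ 𝒫(X) ∩ LH satisfy 1/p(x) − 1/q(x) ≡ η for a constant η ∈ [0,1), and let ω be a weight on X. Suppose there is a constant C₀ such that sup_{t>0} t ‖ω χ_{{x∈X : M_η f(x) > t}}‖_{q(·)} ≤ C₀‖ω f‖_{p(·)} for every measurable function f. Then there is a constant K, independent of the ball, such that for every ball B ⊆ X with ‖ω^{−1} χ_B‖_{p′(·)} < ∞ one has μ(B)^{η−1} ‖ω χ_B‖_{q(·)} ‖ω^{−1} χ_B‖_{p′(·)} ≤ K. -/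
open MeasureTheory ENNReal Set Filter Topology

noncomputable section

variable {X : Type*}

/-- Auxiliary: monotonicity of the Luxemburg norm in the function argument. -/
theorem luxNorm_mono15 {X : Type*} [MeasurableSpace X] (μ : Measure X) (P : X → ℝ≥0∞)
    {f g : X → ℝ≥0∞} (h : ∀ x, f x ≤ g x) : luxNorm μ P f ≤ luxNorm μ P g := by
  apply sInf_le_sInf
  rintro lam ⟨hl, hle⟩
  refine ⟨hl, le_trans (add_le_add ?_ ?_) hle⟩
  · exact lintegral_mono fun x =>
      ENNReal.rpow_le_rpow (ENNReal.div_le_div_right (h x) _) ENNReal.toReal_nonneg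
  · exact essSup_mono_ae (Filter.Eventually.of_forall fun x => ENNReal.div_le_div_right (h x) _)

/-- Under the weak-type bound, the `A_{p(·),q(·)}` quantity is
uniformly bounded over the balls with `‖ω⁻¹χ_B‖_{p′(·)} < ∞`. -/
theorem statement15 {X : Type*} [MeasurableSpace X]
    (d : X → X → ℝ) (A0 : ℝ) (μ : Measure X) (Cμ : ℝ≥0∞)
    (hd : IsQuasiMetric d A0)
    (hball : ∀ (c : X) (r : ℝ), MeasurableSet (qball d c r))
    (hdbl : IsDoubling d μ Cμ)
    (η : ℝ) (hη0 : 0 ≤ η) (hη1 : η < 1)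
    (p q : X → ℝ≥0∞) (hp : MemP μ p) (hq : MemP μ q)
    (hpLH : MemLH d p) (hqLH : MemLH d q)
    (hpq : ∀ x, (p x)⁻¹ = (q x)⁻¹ + ENNReal.ofReal η)
    (ω : X → ℝ≥0∞) (hω : IsWeight d μ ω)
    (C0 : ℝ≥0∞) (hC0 : C0 ≠ ∞)
    (hbound : ∀ f : X → ℝ≥0∞, Measurable f → ∀ t : ℝ≥0∞, 0 < t →
      t * luxNorm μ q ({x | t < fracMax d μ η f x}.indicator ω) ≤
        C0 * luxNorm μ p (fun x => ω x * f x)) :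
    ∃ K : ℝ≥0∞, K ≠ ∞ ∧ ∀ (c : X) (r : ℝ), 0 < r →
      luxNorm μ (conjExp p) ((qball d c r).indicator fun x => (ω x)⁻¹) ≠ ∞ →
        μ (qball d c r) ^ (η - 1) * luxNorm μ q ((qball d c r).indicator ω) *
            luxNorm μ (conjExp p) ((qball d c r).indicator fun x => (ω x)⁻¹) ≤ K := by

  obtain ⟨⟨hpm, hp1, hpfin, hpsup⟩, hpinf⟩ := hp
  obtain ⟨hωm, hωae, hωloc⟩ := hω
  refine ⟨4 * C0, ENNReal.mul_ne_top (by norm_num) hC0, ?_⟩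
  intro c r hr hNfin
  set B : Set X := qball d c r with hB
  have hBmeas := hball c r
  set g : X → ℝ≥0∞ := B.indicator fun x => (ω x)⁻¹ with hg
  set N : ℝ≥0∞ := luxNorm μ (conjExp p) g with hNdef
  rcases eq_or_ne N 0 with hN0 | hN0
  · rw [hN0, mul_zero]; exact zero_le
  -- measure of the ball is positive and finite
  have hμpos : 0 < μ B := by
    have h2 : 2 * (r / 2) = r := by ring
    have := (hdbl.2 c (r / 2) (by linarith)).1
    rwa [h2] at this
  have hμfin : μ B < ∞ := by
    have h3 := (hdbl.2 c r hr).2.2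
    exact lt_of_le_of_lt (le_mul_of_one_le_left zero_le hdbl.1) h3
  set m : ℝ≥0∞ := μ B ^ (η - 1) with hm
  have hm0 : m ≠ 0 := (ENNReal.rpow_pos hμpos hμfin.ne).ne'
  have hmtop : m ≠ ∞ := by
    intro h
    rcases ENNReal.rpow_eq_top_iff.1 h with ⟨h1, -⟩ | ⟨h1, -⟩
    · exact hμpos.ne' h1
    · exact hμfin.ne h1
  -- the parameter lam
  set lam : ℝ≥0∞ := N / 2 with hlam
  have hlamfin : lam ≠ ∞ := ne_top_of_le_ne_top hNfin ENNReal.half_le_self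
  have hlam0 : lam ≠ 0 := by
    rw [hlam, Ne, ENNReal.div_eq_zero_iff]
    rintro (h | h)
    · exact hN0 h
    · exact ENNReal.ofNat_ne_top h
  have hlamlt : lam < N := ENNReal.half_lt_self hN0 hNfin
  -- the conjugate exponent
  have hconjmeas : Measurable (conjExp p) := by
    unfold conjExp
    exact Measurable.ite (hpm (measurableSet_singleton ∞)) measurable_const
      (hpm.div (hpm.sub measurable_const))
  have hconj_eq : ∀ x, conjExp p x = p x / (p x - 1) := fun x => if_neg (hpfin x)
  have hconj_ne_top_iff : ∀ x, conjExp p x ≠ ∞ ↔ 1 < p x := by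
    intro x
    rw [hconj_eq x]
    constructor
    · intro h
      rcases lt_or_eq_of_le (hp1 x) with h1 | h1
      · exact h1
      · exfalso; apply h; rw [← h1]; simp
    · intro h1
      rw [Ne, ENNReal.div_eq_top]
      rintro (⟨-, h2⟩ | ⟨h2, -⟩)
      · rw [tsub_eq_zero_iff_le] at h2; exact absurd h2 (not_le.mpr h1)
      · exact hpfin x h2
  have hconj0 : ∀ x, conjExp p x ≠ 0 := by
    intro x
    rw [hconj_eq x, Ne, ENNReal.div_eq_zero_iff]
    rintro (h | h)
    · have := hp1 x; rw [h] at this; simp at this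
    · have h2 : p x - 1 ≤ p x := tsub_le_self
      rw [h] at h2
      exact hpfin x (top_le_iff.mp h2)
  -- a.e. facts
  have hps : ∀ᵐ x ∂μ, essInf p μ ≤ p x := ae_essInf_le
  have hplt : ∀ᵐ x ∂μ, 1 < p x := hps.mono fun x hx => lt_of_lt_of_le hpinf hx
  have hTnull : μ {x | conjExp p x = ∞} = 0 := by
    have h : ∀ᵐ x ∂μ, conjExp p x ≠ ∞ := hplt.mono fun x hx => (hconj_ne_top_iff x).mpr hx
    simpa [ae_iff] using h
  have hessconj : ∀ F : X → ℝ≥0∞, essSup F (μ.restrict {x | conjExp p x = ∞}) = 0 := by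
    intro F
    rw [Measure.restrict_eq_zero.mpr hTnull]
    exact essSup_measure_zero.trans bot_eq_zero'
  have hpT : {x | p x = ∞} = (∅ : Set X) :=
    eq_empty_iff_forall_notMem.mpr fun x hx => hpfin x hx
  have hpTc : {x | p x ≠ ∞} = (univ : Set X) := eq_univ_of_forall fun x => hpfin x
  set T : Set X := {x | conjExp p x ≠ ∞} with hT
  have hTmeas : MeasurableSet T := (hconjmeas (measurableSet_singleton ∞)).compl
  have hTc : Tᶜ = {x | conjExp p x = ∞} := by ext x; simp [hT]
  set s : X → ℝ := fun x => (conjExp p x).toReal with hs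
  have hsmeas : Measurable s := ENNReal.measurable_toReal.comp hconjmeas
  have hs0 : ∀ x, 0 ≤ s x := fun x => ENNReal.toReal_nonneg
  have hspos : ∀ x ∈ T, 0 < s x := fun x hx => ENNReal.toReal_pos (hconj0 x) hx
  have hax : ∀ x, 1 < p x → 1 < (p x).toReal := by
    intro x hx
    have := (ENNReal.toReal_lt_toReal ENNReal.one_ne_top (hpfin x)).mpr hx
    simpa using this
  have hsx : ∀ x, 1 < p x → s x = (p x).toReal / ((p x).toReal - 1) := by
    intro x hx
    rw [hs]
    simp only
    rw [hconj_eq x, ENNReal.toReal_div, ENNReal.toReal_sub_of_le (hp1 x) (hpfin x),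
      ENNReal.toReal_one]
  -- alernative description of N
  have hNalt : N = sInf {l : ℝ≥0∞ | 0 < l ∧ (∫⁻ x in T, (g x / l) ^ s x ∂μ) ≤ 1} := by
    rw [hNdef]
    unfold luxNorm
    congr 1
    ext l
    simp only [mem_setOf_eq]
    rw [hessconj, add_zero]
  -- the modular of g/lam
  set ρ : ℝ≥0∞ := ∫⁻ x in T, (g x / lam) ^ s x ∂μ with hρdef
  have hρ1 : 1 < ρ := by
    by_contra hcon
    push_neg at hcon
    have hmem : lam ∈ {l : ℝ≥0∞ | 0 < l ∧ (∫⁻ x in T, (g x / l) ^ s x ∂μ) ≤ 1} :=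
      ⟨pos_iff_ne_zero.mpr hlam0, hcon⟩
    have hle : N ≤ lam := by rw [hNalt]; exact sInf_le hmem
    exact absurd hle (not_le.mpr hlamlt)
  have hρ0 : ρ ≠ 0 := (lt_trans zero_lt_one hρ1).ne'
  -- finiteness of the modular
  have hρtop : ρ ≠ ∞ := by
    have hlt : sInf {l : ℝ≥0∞ | 0 < l ∧ (∫⁻ x in T, (g x / l) ^ s x ∂μ) ≤ 1} < N + 1 := by
      rw [← hNalt]; exact ENNReal.lt_add_right hNfin one_ne_zero
    obtain ⟨l0, ⟨hl00, hl0mod⟩, hl0lt⟩ := sInf_lt_iff.mp hlt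
    have hl0fin : l0 ≠ ∞ := hl0lt.ne_top
    have hμne : μ ≠ 0 := by
      intro h; rw [hB, h] at hμpos; simp at hμpos
    have hpmfin : essInf p μ ≠ ∞ := by
      have : ∀ᵐ x ∂μ, essInf p μ ≤ p x ∧ p x ≤ essSup p μ :=
        hps.and (ae_le_essSup p)
      have hne : (ae μ).NeBot := ae_neBot.mpr hμne
      obtain ⟨x, hx1, hx2⟩ := this.exists
      exact (lt_of_le_of_lt (le_trans hx1 hx2) hpsup).ne
    set b : ℝ := (essInf p μ).toReal with hb
    have hb1 : 1 < b := by
      have := (ENNReal.toReal_lt_toReal ENNReal.one_ne_top hpmfin).mpr hpinf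
      simpa using this
    set P : ℝ := b / (b - 1) with hP
    have hP0 : 0 ≤ P := div_nonneg (by linarith) (by linarith)
    have hsP : ∀ᵐ x ∂μ, s x ≤ P := by
      filter_upwards [hps, hplt] with x hx hx1
      have ha1 : 1 < (p x).toReal := hax x hx1
      have hab : b ≤ (p x).toReal := (ENNReal.toReal_le_toReal hpmfin (hpfin x)).mpr hx
      rw [hsx x hx1, hP, div_le_div_iff₀ (by linarith) (by linarith)]
      nlinarith
    set M : ℝ≥0∞ := max 1 ((l0 / lam) ^ P) with hM
    have hMtop : M ≠ ∞ := by
      have h1 : (l0 / lam) ^ P ≠ ∞ :=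
        ENNReal.rpow_ne_top_of_nonneg hP0 (ENNReal.div_lt_top hl0fin hlam0).ne
      rw [hM]
      exact (max_lt (lt_top_iff_ne_top.mpr one_ne_top) (lt_top_iff_ne_top.mpr h1)).ne
    have key : ∀ᵐ x ∂(μ.restrict T), (g x / lam) ^ s x ≤ M * (g x / l0) ^ s x := by
      filter_upwards [ae_restrict_of_ae hsP] with x hxP
      have hsplit : g x / lam = (l0 / lam) * (g x / l0) := by
        rw [div_eq_mul_inv, div_eq_mul_inv, div_eq_mul_inv,
          show l0 * lam⁻¹ * (g x * l0⁻¹) = (l0 * l0⁻¹) * (g x * lam⁻¹) by ring,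
          ENNReal.mul_inv_cancel hl00.ne' hl0fin, one_mul]
      calc (g x / lam) ^ s x = (l0 / lam) ^ s x * (g x / l0) ^ s x := by
            rw [hsplit, ENNReal.mul_rpow_of_nonneg _ _ (hs0 x)]
      _ ≤ M * (g x / l0) ^ s x := by
            apply mul_le_mul_left
            rcases le_total (l0 / lam) 1 with h | h
            · exact le_max_of_le_left (ENNReal.rpow_le_one h (hs0 x))
            · exact le_max_of_le_right (ENNReal.rpow_le_rpow_of_exponent_le h hxP)
    have hle : ρ ≤ M * ∫⁻ x in T, (g x / l0) ^ s x ∂μ := by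
      rw [hρdef]
      calc (∫⁻ x in T, (g x / lam) ^ s x ∂μ)
          ≤ ∫⁻ x in T, M * (g x / l0) ^ s x ∂μ := lintegral_mono_ae key
      _ = M * ∫⁻ x in T, (g x / l0) ^ s x ∂μ := lintegral_const_mul' _ _ hMtop
    intro habs
    rw [habs] at hle
    have : M * (∫⁻ x in T, (g x / l0) ^ s x ∂μ) ≤ M * 1 := mul_le_mul_right hl0mod M
    rw [mul_one] at this
    exact (lt_of_le_of_lt (le_trans hle this) (lt_top_iff_ne_top.mpr hMtop)).ne rfl
  have hρge1 : (1 : ℝ≥0∞) ≤ ρ := hρ1.le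
  -- the test function f
  set f : X → ℝ≥0∞ := fun x => (ω x)⁻¹ * ((g x / lam) ^ (s x - 1) / ρ) with hf
  have hgmeas : Measurable g := (hωm.inv).indicator hBmeas
  have hfmeas : Measurable f := by
    apply Measurable.mul hωm.inv
    exact ((hgmeas.div measurable_const).pow (hsmeas.sub measurable_const)).div
      measurable_const
  have hωf : ∀ᵐ x ∂μ, ω x * f x = (g x / lam) ^ (s x - 1) / ρ := by
    filter_upwards [hωae] with x hx
    rw [hf]
    simp only
    rw [← mul_assoc, ENNReal.mul_inv_cancel hx.1.ne' hx.2.ne, one_mul]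
  -- full-space integral of (g/lam)^s equals ρ
  have huniv : (∫⁻ x, (g x / lam) ^ s x ∂μ) = ρ := by
    rw [hρdef, ← lintegral_add_compl (fun x => (g x / lam) ^ s x) hTmeas]
    rw [show (∫⁻ x in Tᶜ, (g x / lam) ^ s x ∂μ) = 0 from
      setLIntegral_measure_zero _ _ (by rw [hTc]; exact hTnull), add_zero]
  -- the p-modular of ω f is at most 1
  have hnormp : luxNorm μ p (fun x => ω x * f x) ≤ 1 := by
    apply sInf_le
    refine ⟨zero_lt_one, ?_⟩
    have h2 : μ.restrict {x | p x = ∞} = 0 := by rw [hpT, Measure.restrict_empty]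
    rw [h2]
    rw [show essSup (fun x => ω x * f x / 1) (0 : Measure X) = 0 from
      essSup_measure_zero.trans bot_eq_zero', add_zero, hpTc, Measure.restrict_univ]
    have hae2 : ∀ᵐ x ∂μ, (ω x * f x / 1) ^ (p x).toReal ≤ ρ⁻¹ * (g x / lam) ^ s x := by
      filter_upwards [hωf, hplt] with x hx h1x
      rw [div_one, hx]
      have ha1 : 1 < (p x).toReal := hax x h1x
      have hexp : (s x - 1) * (p x).toReal = s x := by
        rw [hsx x h1x]
        have hne : (p x).toReal - 1 ≠ 0 := by linarith
        field_simp
        ring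
      calc ((g x / lam) ^ (s x - 1) / ρ) ^ (p x).toReal
          = (g x / lam) ^ ((s x - 1) * (p x).toReal) / ρ ^ (p x).toReal := by
            rw [ENNReal.div_rpow_of_nonneg _ _ ENNReal.toReal_nonneg, ENNReal.rpow_mul]
      _ = (g x / lam) ^ s x / ρ ^ (p x).toReal := by rw [hexp]
      _ ≤ (g x / lam) ^ s x / ρ := by
            apply ENNReal.div_le_div_left
            calc ρ = ρ ^ (1 : ℝ) := (ENNReal.rpow_one ρ).symm
            _ ≤ ρ ^ (p x).toReal := ENNReal.rpow_le_rpow_of_exponent_le hρge1 (by linarith)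
      _ = ρ⁻¹ * (g x / lam) ^ s x := by rw [div_eq_mul_inv, mul_comm]
    calc (∫⁻ x, (ω x * f x / 1) ^ (p x).toReal ∂μ)
        ≤ ∫⁻ x, ρ⁻¹ * (g x / lam) ^ s x ∂μ := lintegral_mono_ae hae2
    _ = ρ⁻¹ * ∫⁻ x, (g x / lam) ^ s x ∂μ :=
        lintegral_const_mul' _ _ (ENNReal.inv_ne_top.mpr hρ0)
    _ = ρ⁻¹ * ρ := by rw [huniv]
    _ = 1 := ENNReal.inv_mul_cancel hρ0 hρtop
  -- ρ is at most the integral over B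
  have hρleB : ρ ≤ ∫⁻ x in B, (g x / lam) ^ s x ∂μ := by
    have hptw : ∀ᵐ x ∂(μ.restrict T),
        (g x / lam) ^ s x ≤ B.indicator (fun y => (g y / lam) ^ s y) x := by
      filter_upwards [ae_restrict_mem hTmeas] with x hxT
      by_cases hxB : x ∈ B
      · rw [indicator_of_mem hxB]
      · rw [indicator_of_notMem hxB]
        have hg0 : g x = 0 := indicator_of_notMem hxB _
        rw [hg0, ENNReal.zero_div, ENNReal.zero_rpow_of_pos (hspos x hxT)]
    calc ρ ≤ ∫⁻ x in T, B.indicator (fun y => (g y / lam) ^ s y) x ∂μ :=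
          lintegral_mono_ae hptw
    _ ≤ ∫⁻ x, B.indicator (fun y => (g y / lam) ^ s y) x ∂μ :=
          lintegral_mono' Measure.restrict_le_self le_rfl
    _ = ∫⁻ x in B, (g x / lam) ^ s x ∂μ := lintegral_indicator hBmeas _
  -- the integral of f over B is at least lam
  have hint : lam ≤ ∫⁻ x in B, f x ∂μ := by
    have hae3 : ∀ᵐ x ∂(μ.restrict B), lam * ρ⁻¹ * (g x / lam) ^ s x ≤ f x := by
      filter_upwards [ae_restrict_of_ae hωae, ae_restrict_mem hBmeas] with x hx hxB
      have hgx : g x = (ω x)⁻¹ := indicator_of_mem hxB _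
      have hu0 : (ω x)⁻¹ / lam ≠ 0 := by
        simp [ENNReal.div_eq_zero_iff, hx.2.ne, hlamfin]
      have hut : (ω x)⁻¹ / lam ≠ ∞ := by
        simp [ENNReal.div_eq_top, hx.1.ne', hlam0]
      have hrw : ((ω x)⁻¹ / lam) ^ s x
          = ((ω x)⁻¹ / lam) ^ (s x - 1) * ((ω x)⁻¹ / lam) := by
        nth_rewrite 1 [show s x = (s x - 1) + 1 by ring]
        rw [ENNReal.rpow_add _ _ hu0 hut, ENNReal.rpow_one]
      have hlu : lam * ((ω x)⁻¹ / lam) = (ω x)⁻¹ := ENNReal.mul_div_cancel hlam0 hlamfin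
      apply le_of_eq
      rw [hf]
      simp only
      rw [hgx, hrw, div_eq_mul_inv (((ω x)⁻¹ / lam) ^ (s x - 1)) ρ]
      calc lam * ρ⁻¹ * (((ω x)⁻¹ / lam) ^ (s x - 1) * ((ω x)⁻¹ / lam))
          = (lam * ((ω x)⁻¹ / lam)) * (((ω x)⁻¹ / lam) ^ (s x - 1) * ρ⁻¹) := by ring
      _ = (ω x)⁻¹ * (((ω x)⁻¹ / lam) ^ (s x - 1) * ρ⁻¹) := by rw [hlu]
    calc lam = lam * ρ⁻¹ * ρ := by
          rw [mul_assoc, ENNReal.inv_mul_cancel hρ0 hρtop, mul_one]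
    _ ≤ lam * ρ⁻¹ * ∫⁻ x in B, (g x / lam) ^ s x ∂μ := mul_le_mul_right hρleB _
    _ = ∫⁻ x in B, lam * ρ⁻¹ * (g x / lam) ^ s x ∂μ :=
          (lintegral_const_mul' _ _
            (ENNReal.mul_ne_top hlamfin (ENNReal.inv_ne_top.mpr hρ0))).symm
    _ ≤ ∫⁻ x in B, f x ∂μ := lintegral_mono_ae hae3
  -- lower bound on the fractional maximal function on B
  have hMη : ∀ x ∈ B, m * lam ≤ fracMax d μ η f x := by
    intro x hx
    have h1 : m * lam ≤ μ (qball d c r) ^ (η - 1) * ∫⁻ y in qball d c r, f y ∂μ :=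
      mul_le_mul_right hint _
    refine le_trans h1 ?_
    exact le_iSup_of_le c (le_iSup_of_le r (le_iSup_of_le hr (le_iSup_of_le hx le_rfl)))
  set t : ℝ≥0∞ := m * lam / 2 with ht
  have hmlam0 : m * lam ≠ 0 := mul_ne_zero hm0 hlam0
  have hmlamtop : m * lam ≠ ∞ := ENNReal.mul_ne_top hmtop hlamfin
  have ht0 : 0 < t := ENNReal.half_pos hmlam0
  have hsub : B ⊆ {x | t < fracMax d μ η f x} := fun x hx =>
    lt_of_lt_of_le (ENNReal.half_lt_self hmlam0 hmlamtop) (hMη x hx)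
  have hb2 : t * luxNorm μ q (B.indicator ω) ≤ C0 := by
    calc t * luxNorm μ q (B.indicator ω)
        ≤ t * luxNorm μ q ({x | t < fracMax d μ η f x}.indicator ω) :=
          mul_le_mul_right (luxNorm_mono15 μ q fun x =>
            indicator_le_indicator_of_subset hsub (fun y => zero_le) x) t
    _ ≤ C0 * luxNorm μ p (fun x => ω x * f x) := hbound f hfmeas t ht0
    _ ≤ C0 * 1 := mul_le_mul_right hnormp C0
    _ = C0 := mul_one C0
  -- conclude
  have h2lam : (2 : ℝ≥0∞) * lam = N := ENNReal.mul_div_cancel two_ne_zero ENNReal.ofNat_ne_top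
  have h2t : (2 : ℝ≥0∞) * t = m * lam := ENNReal.mul_div_cancel two_ne_zero ENNReal.ofNat_ne_top
  have heq : m * luxNorm μ q (B.indicator ω) * N = 4 * (t * luxNorm μ q (B.indicator ω)) := by
    have h1 : m * luxNorm μ q (B.indicator ω) * N
        = 2 * (m * lam) * luxNorm μ q (B.indicator ω) := by rw [← h2lam]; ring
    rw [h1, ← h2t]; ring
  rw [heq]
  exact mul_le_mul_right hb2 4

end
end

section
/- Let (X,d,μ) be a space of homogeneous type, let p(·), q(·) ∈ 𝒫₁(X) satisfy 1/p(x) − 1/q(x) ≡ η for a constant η ∈ [0,1), and let ω ∈ A_{p(·),q(·)}(X). Then there is a constant C, depending only on [ω]_{A_{p(·),q(·)}}, q₋ and q₊, such that for every ball B ⊆ X, ∫_B ‖ω^{−1} χ_B‖_{p′(·)}^{q(x)} · μ(B)^{(η−1)q(x)} · ω(x)^{q(x)} dμ(x) ≤ C. -/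
open MeasureTheory ENNReal Set Filter Topology

noncomputable section

variable {X : Type*}

/-- If `lam` is admissible for the Luxemburg norm and `q` is finite everywhere, then the
modular integral over the whole space is at most `1`. -/
private lemma lux_aux_le_one {X : Type*} [MeasurableSpace X] {μ : Measure X} {q : X → ℝ≥0∞}
    (hqfin : ∀ x, q x ≠ ∞) {f : X → ℝ≥0∞} {lam : ℝ≥0∞}
    (hlam : (∫⁻ x in {x | q x ≠ ∞}, (f x / lam) ^ (q x).toReal ∂μ) +
      essSup (fun x => f x / lam) (μ.restrict {x | q x = ∞}) ≤ 1) :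
    ∫⁻ x, (f x / lam) ^ (q x).toReal ∂μ ≤ 1 := by
  have hset : {x : X | q x ≠ ∞} = Set.univ := Set.eq_univ_of_forall hqfin
  rw [hset, Measure.restrict_univ] at hlam
  exact le_trans (self_le_add_right _ _) hlam

/-- The Luxemburg norm of the restriction of an a.e. positive weight to a set of positive
measure is nonzero. -/
private lemma luxNorm_pos {X : Type*} [MeasurableSpace X] {μ : Measure X}
    {q : X → ℝ≥0∞} (hq1 : ∀ x, 1 ≤ q x) (hqfin : ∀ x, q x ≠ ∞)
    {B : Set X} (hB : MeasurableSet B) (hBpos : 0 < μ B)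
    {ω : X → ℝ≥0∞} (hωm : Measurable ω) (hωpos : ∀ᵐ x ∂μ, 0 < ω x) :
    luxNorm μ q (B.indicator ω) ≠ 0 := by
  intro h0
  unfold luxNorm at h0
  have hqe1 : ∀ x, (1 : ℝ) ≤ (q x).toReal := by
    intro x
    have := ENNReal.toReal_mono (hqfin x) (hq1 x)
    rwa [ENNReal.toReal_one] at this
  have hSk : ∀ k : ℕ, μ (B ∩ {x | ((k : ℝ≥0∞) + 1)⁻¹ ≤ ω x}) = 0 := by
    intro k
    have hSmeas : MeasurableSet (B ∩ {x | ((k : ℝ≥0∞) + 1)⁻¹ ≤ ω x}) :=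
      hB.inter (hωm measurableSet_Ici)
    have hk0 : ((k : ℝ≥0∞) + 1) ≠ 0 := by simp
    have hktop : ((k : ℝ≥0∞) + 1) ≠ ∞ := by simp
    have key : ∀ m : ℕ, μ (B ∩ {x | ((k : ℝ≥0∞) + 1)⁻¹ ≤ ω x}) ≤ ((m : ℝ≥0∞) + 1)⁻¹ := by
      intro m
      have hm0 : ((m : ℝ≥0∞) + 1) ≠ 0 := by simp
      have hmtop : ((m : ℝ≥0∞) + 1) ≠ ∞ := by simp
      have hεpos : (0 : ℝ≥0∞) < (((k : ℝ≥0∞) + 1) * ((m : ℝ≥0∞) + 1))⁻¹ :=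
        ENNReal.inv_pos.mpr (ENNReal.mul_ne_top hktop hmtop)
      have hlt : sInf {lam : ℝ≥0∞ | 0 < lam ∧
          (∫⁻ x in {x | q x ≠ ∞}, (B.indicator ω x / lam) ^ (q x).toReal ∂μ) +
            essSup (fun x => B.indicator ω x / lam) (μ.restrict {x | q x = ∞}) ≤ 1}
          < (((k : ℝ≥0∞) + 1) * ((m : ℝ≥0∞) + 1))⁻¹ := by
        rw [h0]; exact hεpos
      obtain ⟨lam, hmem, hlamlt⟩ := sInf_lt_iff.mp hlt
      obtain ⟨hlam0, hlam1⟩ := hmem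
      have hint : ∫⁻ x, (B.indicator ω x / lam) ^ (q x).toReal ∂μ ≤ 1 :=
        lux_aux_le_one hqfin hlam1
      have hpt : ∀ x ∈ B ∩ {x | ((k : ℝ≥0∞) + 1)⁻¹ ≤ ω x},
          ((m : ℝ≥0∞) + 1) ≤ (B.indicator ω x / lam) ^ (q x).toReal := by
        intro x hx
        rw [Set.indicator_of_mem hx.1]
        have h1 : ((k : ℝ≥0∞) + 1)⁻¹ / lam ≤ ω x / lam :=
          ENNReal.div_le_div_right hx.2 lam
        have h2 : ((k : ℝ≥0∞) + 1)⁻¹ / ((((k : ℝ≥0∞) + 1) * ((m : ℝ≥0∞) + 1))⁻¹)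
            ≤ ((k : ℝ≥0∞) + 1)⁻¹ / lam :=
          ENNReal.div_le_div_left hlamlt.le _
        have h3 : ((k : ℝ≥0∞) + 1)⁻¹ / ((((k : ℝ≥0∞) + 1) * ((m : ℝ≥0∞) + 1))⁻¹)
            = (m : ℝ≥0∞) + 1 := by
          rw [div_eq_mul_inv, inv_inv, ← mul_assoc, ENNReal.inv_mul_cancel hk0 hktop, one_mul]
        have hbase : ((m : ℝ≥0∞) + 1) ≤ ω x / lam := by
          rw [← h3]; exact h2.trans h1
        calc ((m : ℝ≥0∞) + 1) = ((m : ℝ≥0∞) + 1) ^ (1 : ℝ) := (ENNReal.rpow_one _).symm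
          _ ≤ ((m : ℝ≥0∞) + 1) ^ (q x).toReal :=
              ENNReal.rpow_le_rpow_of_exponent_le (by simp) (hqe1 x)
          _ ≤ (ω x / lam) ^ (q x).toReal :=
              ENNReal.rpow_le_rpow hbase ENNReal.toReal_nonneg
      have hmul : ((m : ℝ≥0∞) + 1) * μ (B ∩ {x | ((k : ℝ≥0∞) + 1)⁻¹ ≤ ω x}) ≤ 1 := by
        calc ((m : ℝ≥0∞) + 1) * μ (B ∩ {x | ((k : ℝ≥0∞) + 1)⁻¹ ≤ ω x})
            = ∫⁻ _ in B ∩ {x | ((k : ℝ≥0∞) + 1)⁻¹ ≤ ω x}, ((m : ℝ≥0∞) + 1) ∂μ :=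
              (setLIntegral_const _ _).symm
          _ ≤ ∫⁻ x in B ∩ {x | ((k : ℝ≥0∞) + 1)⁻¹ ≤ ω x},
                (B.indicator ω x / lam) ^ (q x).toReal ∂μ := setLIntegral_mono' hSmeas hpt
          _ ≤ ∫⁻ x, (B.indicator ω x / lam) ^ (q x).toReal ∂μ := setLIntegral_le_lintegral _ _
          _ ≤ 1 := hint
      rw [mul_comm] at hmul
      exact ENNReal.le_inv_iff_mul_le.mpr hmul
    by_contra hne
    obtain ⟨n, hn⟩ := ENNReal.exists_inv_nat_lt hne
    have h1 : μ (B ∩ {x | ((k : ℝ≥0∞) + 1)⁻¹ ≤ ω x}) ≤ ((n : ℝ≥0∞) + 1)⁻¹ := key n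
    have h2 : ((n : ℝ≥0∞) + 1)⁻¹ ≤ ((n : ℝ≥0∞))⁻¹ :=
      ENNReal.inv_le_inv' (self_le_add_right _ _)
    exact absurd (h1.trans h2) (not_le.mpr hn)
  have hmem : B ∩ {x | 0 < ω x} ⊆ ⋃ k : ℕ, B ∩ {x | ((k : ℝ≥0∞) + 1)⁻¹ ≤ ω x} := by
    rintro x ⟨hxB, hx⟩
    obtain ⟨n, hn⟩ := ENNReal.exists_inv_nat_lt hx.ne'
    refine Set.mem_iUnion.mpr ⟨n, hxB, ?_⟩
    exact le_trans (ENNReal.inv_le_inv' (self_le_add_right _ _)) hn.le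
  have hU : μ (⋃ k : ℕ, B ∩ {x | ((k : ℝ≥0∞) + 1)⁻¹ ≤ ω x}) = 0 := measure_iUnion_null hSk
  have hzero : μ {x | ¬ 0 < ω x} = 0 := by
    simpa [ae_iff] using hωpos
  have hBzero : μ B ≤ 0 := by
    have hsub : B ⊆ (B ∩ {x | 0 < ω x}) ∪ {x | ¬ 0 < ω x} := by
      intro x hx
      by_cases h : 0 < ω x
      · exact Or.inl ⟨hx, h⟩
      · exact Or.inr h
    calc μ B ≤ μ ((B ∩ {x | 0 < ω x}) ∪ {x | ¬ 0 < ω x}) := measure_mono hsub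
      _ ≤ μ (B ∩ {x | 0 < ω x}) + μ {x | ¬ 0 < ω x} := measure_union_le _ _
      _ ≤ μ (⋃ k : ℕ, B ∩ {x | ((k : ℝ≥0∞) + 1)⁻¹ ≤ ω x}) + 0 := by
          rw [hzero]; exact add_le_add (measure_mono hmem) le_rfl
      _ = 0 := by rw [hU, add_zero]
  exact hBpos.ne' (le_antisymm hBzero zero_le)


/-- For `ω ∈ A_{p(·),q(·)}`:
`∫_B ‖ω⁻¹χ_B‖_{p′(·)}^{q(x)} μ(B)^{(η−1)q(x)} ω(x)^{q(x)} dμ ≤ C`. -/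
theorem statement16 {X : Type*} [MeasurableSpace X]
    (d : X → X → ℝ) (A0 : ℝ) (μ : Measure X) (Cμ : ℝ≥0∞)
    (hd : IsQuasiMetric d A0)
    (hball : ∀ (c : X) (r : ℝ), MeasurableSet (qball d c r))
    (hdbl : IsDoubling d μ Cμ)
    (η : ℝ) (hη0 : 0 ≤ η) (hη1 : η < 1)
    (p q : X → ℝ≥0∞) (hp : MemP1 μ p) (hq : MemP1 μ q)
    (hpq : ∀ x, (p x)⁻¹ = (q x)⁻¹ + ENNReal.ofReal η)
    (ω : X → ℝ≥0∞) (hω : IsWeight d μ ω)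
    (hA : ApqConst d μ η p q ω ≠ ∞) :
    ∃ C : ℝ≥0∞, C ≠ ∞ ∧ ∀ (c : X) (r : ℝ), 0 < r →
      (∫⁻ x in qball d c r,
        (luxNorm μ (conjExp p) ((qball d c r).indicator fun y => (ω y)⁻¹)) ^
            (q x).toReal *
          μ (qball d c r) ^ ((η - 1) * (q x).toReal) * ω x ^ (q x).toReal ∂μ) ≤ C := by
  obtain ⟨hqm, hq1, hqfin, hqsup⟩ := hq
  obtain ⟨hωm, hωfin, hωint⟩ := hω
  have hωpos : ∀ᵐ x ∂μ, 0 < ω x := hωfin.mono fun x hx => hx.1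
  set A' := max (ApqConst d μ η p q ω) 1 with hA'def
  have hA'top : A' ≠ ∞ := (max_lt hA.lt_top ENNReal.one_lt_top).ne
  have h1A' : (1 : ℝ≥0∞) ≤ A' := le_max_right _ _
  have h12A' : (1 : ℝ≥0∞) ≤ 2 * A' := by
    calc (1 : ℝ≥0∞) = 1 * 1 := (one_mul _).symm
      _ ≤ 2 * A' := mul_le_mul' one_le_two h1A'
  set Q := (essSup q μ).toReal with hQdef
  set C0 := max 1 ((2 * A') ^ Q) with hC0def
  have hC0top : C0 ≠ ∞ := by
    have h1 : (2 * A') ^ Q ≠ ∞ :=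
      ENNReal.rpow_ne_top_of_nonneg ENNReal.toReal_nonneg
        (ENNReal.mul_ne_top (by simp) hA'top)
    exact (max_lt ENNReal.one_lt_top h1.lt_top).ne
  refine ⟨C0, hC0top, fun c r hr => ?_⟩
  obtain ⟨hCμ1, hdb⟩ := hdbl
  obtain ⟨h2pos, h2le, h2fin⟩ := hdb c r hr
  set B := qball d c r with hBdef
  have hBmeas : MeasurableSet B := hball c r
  have hB0 : 0 < μ B := by
    rcases eq_or_lt_of_le (zero_le : 0 ≤ μ B) with h | h
    · rw [← h, mul_zero] at h2le
      exact absurd (h2pos.trans_le h2le) (lt_irrefl 0)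
    · exact h
  have hBtop : μ B ≠ ∞ := by
    have h1 : μ B ≤ Cμ * μ B := by
      calc μ B = 1 * μ B := (one_mul _).symm
        _ ≤ Cμ * μ B := mul_le_mul_left hCμ1 _
    exact (h1.trans_lt h2fin).ne
  have hqe1 : ∀ x, (1 : ℝ) ≤ (q x).toReal := by
    intro x
    have := ENNReal.toReal_mono (hqfin x) (hq1 x)
    rwa [ENNReal.toReal_one] at this
  set N' := luxNorm μ (conjExp p) (B.indicator fun y => (ω y)⁻¹) with hN'def
  by_cases hN'0 : N' = 0
  · have hz : ∀ x, N' ^ (q x).toReal * μ B ^ ((η - 1) * (q x).toReal) *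
        ω x ^ (q x).toReal = 0 := by
      intro x
      rw [hN'0, ENNReal.zero_rpow_of_pos (lt_of_lt_of_le zero_lt_one (hqe1 x)),
        zero_mul, zero_mul]
    calc (∫⁻ x in B, N' ^ (q x).toReal * μ B ^ ((η - 1) * (q x).toReal) *
          ω x ^ (q x).toReal ∂μ) = ∫⁻ _ in B, 0 ∂μ := lintegral_congr fun x => hz x
      _ = 0 := lintegral_zero
      _ ≤ C0 := zero_le
  set Nq := luxNorm μ q (B.indicator ω) with hNqdef
  have hNq0 : Nq ≠ 0 := luxNorm_pos hq1 hqfin hBmeas hB0 hωm hωpos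
  have hsup' : μ B ^ (η - 1) * Nq * N' ≤ A' := by
    refine le_trans ?_ (le_max_left _ _)
    rw [hNqdef, hN'def, hBdef]
    exact le_iSup_of_le c (le_iSup_of_le r (le_iSup_of_le hr le_rfl))
  have hmB0 : μ B ^ (η - 1) ≠ 0 := (ENNReal.rpow_pos hB0 hBtop).ne'
  have hT : N' * μ B ^ (η - 1) * Nq ≤ A' := by rw [mul_rotate]; exact hsup'
  have hT0 : N' * μ B ^ (η - 1) ≠ 0 := mul_ne_zero hN'0 hmB0
  have hNqtop : Nq ≠ ∞ := by
    intro h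
    rw [h, ENNReal.mul_top hT0] at hT
    exact hA'top (top_le_iff.mp hT)
  have h2Nq0 : 2 * Nq ≠ 0 := mul_ne_zero (by norm_num) hNq0
  have h2Nqtop : 2 * Nq ≠ ∞ := ENNReal.mul_ne_top (by simp) hNqtop
  -- an admissible `lam` slightly above the norm
  have hNqlt : sInf {lam : ℝ≥0∞ | 0 < lam ∧
      (∫⁻ x in {x | q x ≠ ∞}, (B.indicator ω x / lam) ^ (q x).toReal ∂μ) +
        essSup (fun x => B.indicator ω x / lam) (μ.restrict {x | q x = ∞}) ≤ 1}
      < 2 * Nq := by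
    have : Nq < 2 * Nq := by
      rw [two_mul]; exact ENNReal.lt_add_right hNqtop hNq0
    exact this
  obtain ⟨lam, hmem, hlamlt⟩ := sInf_lt_iff.mp hNqlt
  obtain ⟨hlam0, hlam1⟩ := hmem
  have hint1 : ∫⁻ x in B, (ω x / (2 * Nq)) ^ (q x).toReal ∂μ ≤ 1 := by
    calc ∫⁻ x in B, (ω x / (2 * Nq)) ^ (q x).toReal ∂μ
        ≤ ∫⁻ x in B, (B.indicator ω x / lam) ^ (q x).toReal ∂μ := by
          refine setLIntegral_mono' hBmeas fun x hx => ?_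
          rw [Set.indicator_of_mem hx]
          exact ENNReal.rpow_le_rpow (ENNReal.div_le_div_left hlamlt.le _)
            ENNReal.toReal_nonneg
      _ ≤ ∫⁻ x, (B.indicator ω x / lam) ^ (q x).toReal ∂μ := setLIntegral_le_lintegral _ _
      _ ≤ 1 := lux_aux_le_one hqfin hlam1
  have htle : N' * μ B ^ (η - 1) ≤ 2 * A' / (2 * Nq) := by
    rw [ENNReal.le_div_iff_mul_le (Or.inl h2Nq0) (Or.inl h2Nqtop)]
    calc N' * μ B ^ (η - 1) * (2 * Nq) = 2 * (N' * μ B ^ (η - 1) * Nq) := by ring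
      _ ≤ 2 * A' := mul_le_mul_right hT 2
  have hQae : ∀ᵐ x ∂μ.restrict B, (q x).toReal ≤ Q :=
    ae_restrict_of_ae ((ENNReal.ae_le_essSup q).mono fun x hx =>
      ENNReal.toReal_mono hqsup.ne hx)
  have hptwise : ∀ᵐ x ∂μ.restrict B,
      N' ^ (q x).toReal * μ B ^ ((η - 1) * (q x).toReal) * ω x ^ (q x).toReal
        ≤ C0 * (ω x / (2 * Nq)) ^ (q x).toReal := by
    filter_upwards [hQae] with x hx
    have he0 : (0 : ℝ) ≤ (q x).toReal := ENNReal.toReal_nonneg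
    have heq : N' ^ (q x).toReal * μ B ^ ((η - 1) * (q x).toReal) * ω x ^ (q x).toReal
        = (N' * μ B ^ (η - 1) * ω x) ^ (q x).toReal := by
      rw [ENNReal.rpow_mul, ← ENNReal.mul_rpow_of_nonneg N' (μ B ^ (η - 1)) he0,
        ← ENNReal.mul_rpow_of_nonneg _ (ω x) he0]
    rw [heq]
    calc (N' * μ B ^ (η - 1) * ω x) ^ (q x).toReal
        ≤ (2 * A' * (ω x / (2 * Nq))) ^ (q x).toReal := by
          refine ENNReal.rpow_le_rpow ?_ he0
          calc N' * μ B ^ (η - 1) * ω x ≤ (2 * A' / (2 * Nq)) * ω x :=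
                mul_le_mul_left htle _
            _ = 2 * A' * (ω x / (2 * Nq)) := by
                rw [div_eq_mul_inv, div_eq_mul_inv]; ring
      _ = (2 * A') ^ (q x).toReal * (ω x / (2 * Nq)) ^ (q x).toReal :=
          ENNReal.mul_rpow_of_nonneg _ _ he0
      _ ≤ C0 * (ω x / (2 * Nq)) ^ (q x).toReal := by
          refine mul_le_mul_left ?_ _
          exact le_trans (ENNReal.rpow_le_rpow_of_exponent_le h12A' hx) (le_max_right _ _)
  calc (∫⁻ x in B, N' ^ (q x).toReal * μ B ^ ((η - 1) * (q x).toReal) *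
        ω x ^ (q x).toReal ∂μ)
      ≤ ∫⁻ x in B, C0 * (ω x / (2 * Nq)) ^ (q x).toReal ∂μ := lintegral_mono_ae hptwise
    _ = C0 * ∫⁻ x in B, (ω x / (2 * Nq)) ^ (q x).toReal ∂μ :=
        lintegral_const_mul' _ _ hC0top
    _ ≤ C0 * 1 := mul_le_mul_right hint1 _
    _ = C0 := mul_one _

end
end
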